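/- arXiv:2508.15770 — 2 statements merged into one kernel-verified Lean document; each statement's English description precedes it below -/
import Mathlib

section
/- Let R be a commutative ring, m, n natural numbers with 1 ≤ m ≤ n, and f₁, f₂ ∈ R[T] polynomials each of degree at most m - 1. Let g ∈ R[X,Y] be the (unique) polynomial with (X+Y)·g = (f₁(X) - f₁(-Y)) · (f₂(X) - f₂(-Y)). Then the coefficient of the monomial X^(m-1) Y^(n-1) in g is zero. -/
open MvPolynomial

lemma aeval_totalDegree_le {R : Type*} [CommRing R] (f : Polynomial R)
    (x : MvPolynomial (Fin 2) R) (hx : x.totalDegree ≤ 1) :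
    (Polynomial.aeval x f).totalDegree ≤ f.natDegree := by
  rw [Polynomial.aeval_eq_sum_range]
  refine totalDegree_finsetSum_le fun i hi => ?_
  refine (totalDegree_smul_le _ _).trans ?_
  refine (totalDegree_pow _ _).trans ?_
  have := Finset.mem_range.mp hi
  calc i * x.totalDegree ≤ i * 1 := Nat.mul_le_mul_left _ hx
    _ ≤ f.natDegree := by omega

lemma diag_sum_eq (a b : ℕ) :
    let d : Fin 2 →₀ ℕ := Finsupp.single 0 (a+1) + Finsupp.single 1 b
    ∑ i ∈ d.support, d i = a + 1 + b := by
  intro d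
  show Finsupp.sum _ (fun _ n => n) = _
  rw [Finsupp.sum_add_index' (fun _ => rfl) (fun _ _ _ => rfl),
    Finsupp.sum_single_index rfl, Finsupp.sum_single_index rfl]

lemma coeff_Xadd_mul_succ {R : Type*} [CommRing R] (g : MvPolynomial (Fin 2) R) (a b : ℕ) :
    coeff (Finsupp.single 0 (a+1) + Finsupp.single 1 (b+1)) ((X 0 + X 1) * g) =
      coeff (Finsupp.single 0 a + Finsupp.single 1 (b+1)) g
      + coeff (Finsupp.single 0 (a+1) + Finsupp.single 1 b) g := by
  rw [add_mul, coeff_add, coeff_X_mul', coeff_X_mul']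
  have e0 : (Finsupp.single (0:Fin 2) (a+1) + Finsupp.single 1 (b+1)) - Finsupp.single 0 1
      = Finsupp.single 0 a + Finsupp.single 1 (b+1) := by
    ext i; fin_cases i <;> simp [Finsupp.single_apply]
  have e1 : (Finsupp.single (0:Fin 2) (a+1) + Finsupp.single 1 (b+1)) - Finsupp.single 1 1
      = Finsupp.single 0 (a+1) + Finsupp.single 1 b := by
    ext i; fin_cases i <;> simp [Finsupp.single_apply]
  rw [e0, e1, if_pos, if_pos] <;>
    simp [Finsupp.mem_support_iff, Finsupp.single_apply]

lemma coeff_Xadd_mul_zero {R : Type*} [CommRing R] (g : MvPolynomial (Fin 2) R) (a : ℕ) :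
    coeff (Finsupp.single 0 (a+1) + Finsupp.single 1 0) ((X 0 + X 1) * g) =
      coeff (Finsupp.single 0 a + Finsupp.single 1 0) g := by
  rw [add_mul, coeff_add, coeff_X_mul', coeff_X_mul']
  have e0 : (Finsupp.single (0:Fin 2) (a+1) + Finsupp.single 1 0) - Finsupp.single 0 1
      = Finsupp.single 0 a + Finsupp.single 1 0 := by
    ext i; fin_cases i <;> simp [Finsupp.single_apply]
  rw [e0, if_pos, if_neg] <;>
    simp [Finsupp.mem_support_iff, Finsupp.single_apply]

/-- Let `1 ≤ m ≤ n` and `f₁, f₂ ∈ R[T]` of degree at most `m - 1`. If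
`(X+Y)·g = (f₁(X) - f₁(-Y)) · (f₂(X) - f₂(-Y))` in `R[X,Y]`, then the coefficient
of `X^(m-1) Y^(n-1)` in `g` is zero. -/
theorem coeff_vanishing_flip_pairing {R : Type*} [CommRing R] (m n : ℕ)
    (hm : 1 ≤ m) (hmn : m ≤ n) (f₁ f₂ : Polynomial R)
    (h₁ : f₁.natDegree ≤ m - 1) (h₂ : f₂.natDegree ≤ m - 1)
    (g : MvPolynomial (Fin 2) R)
    (hg : (X 0 + X 1) * g =
        (Polynomial.aeval (X 0 : MvPolynomial (Fin 2) R) f₁ -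
            Polynomial.aeval (-(X 1) : MvPolynomial (Fin 2) R) f₁) *
          (Polynomial.aeval (X 0 : MvPolynomial (Fin 2) R) f₂ -
            Polynomial.aeval (-(X 1) : MvPolynomial (Fin 2) R) f₂)) :
    MvPolynomial.coeff (Finsupp.single 0 (m - 1) + Finsupp.single 1 (n - 1)) g = 0 := by
  -- degree bounds on the variables
  have hX0 : (X (0:Fin 2) : MvPolynomial (Fin 2) R).totalDegree ≤ 1 :=
    (totalDegree_monomial_le _ _).trans (by simp)
  have hX1 : (-(X (1:Fin 2)) : MvPolynomial (Fin 2) R).totalDegree ≤ 1 := by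
    rw [totalDegree_neg]; exact (totalDegree_monomial_le _ _).trans (by simp)
  -- degree bound on the right-hand side
  have hfac : ∀ f : Polynomial R, f.natDegree ≤ m - 1 →
      ((Polynomial.aeval (X 0 : MvPolynomial (Fin 2) R) f -
        Polynomial.aeval (-(X 1) : MvPolynomial (Fin 2) R) f)).totalDegree ≤ m - 1 :=
    fun f hf => (totalDegree_sub _ _).trans (max_le
      ((aeval_totalDegree_le f _ hX0).trans hf)
      ((aeval_totalDegree_le f _ hX1).trans hf))
  have hq : ((X 0 + X 1) * g).totalDegree ≤ (m - 1) + (m - 1) := by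
    rw [hg]
    exact (totalDegree_mul _ _).trans (Nat.add_le_add (hfac f₁ h₁) (hfac f₂ h₂))
  -- coefficients of the product vanish in high degree
  have hr : ∀ a b : ℕ, 2 * m ≤ a + 1 + b + 1 →
      coeff (Finsupp.single 0 (a+1) + Finsupp.single 1 b) ((X 0 + X 1) * g) = 0 := by
    intro a b hab
    refine coeff_eq_zero_of_totalDegree_lt ?_
    rw [diag_sum_eq]
    omega
  -- the key vanishing on high diagonals
  have key : ∀ b a : ℕ, 2 * m ≤ a + b + 2 →
      coeff (Finsupp.single 0 a + Finsupp.single 1 b) g = 0 := by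
    intro b
    induction b with
    | zero =>
      intro a ha
      have h0 := hr a 0 (by omega)
      rwa [coeff_Xadd_mul_zero] at h0
    | succ b ih =>
      intro a ha
      have h0 := hr a (b+1) (by omega)
      rw [coeff_Xadd_mul_succ, ih (a+1) (by omega), add_zero] at h0
      exact h0
  exact key (n - 1) (m - 1) (by omega)
end

section
/- Let R be a commutative ring, r ≥ 1, and p = X^r + c₁X^(r-1) + ... + c_r ∈ R[X] monic, and set A = R[X]/(p). Let s = X^(r-1) + c₁X^(r-2) + ... + c_{r-1} ∈ A. Then: (a) X·s = -c_r in A; (b) for any β ∈ A, if X·β lies in the image of the structure map R → A, then β ∈ R·s; in particular, moreover, if β is represented by a polynomial of degree ≤ r-1 with coefficient of X^(r-1) equal to a ∈ R, then β = a·s. -/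
open Polynomial


/-- Let `p = X^r + c₁X^(r-1) + ... + c_r` be monic (with `c₀ = 1`),
`A = R[X]/(p)`, and `s = X^(r-1) + c₁X^(r-2) + ... + c_{r-1}` in `A`. Then
(a) `X·s = -c_r` in `A`; (b) if `X·β` lies in the image of `R → A` then β ∈ R·s;
(c) if moreover `β` is represented by a polynomial of degree ≤ r-1 with
coefficient of `X^(r-1)` equal to `a`, then `β = a·s`. -/
theorem quotient_hyperplane_class_lemma {R : Type*} [CommRing R] (r : ℕ) (hr : 1 ≤ r)
    (c : ℕ → R) (hc0 : c 0 = 1) (p : Polynomial R)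
    (hp : p = ∑ i ∈ Finset.range (r + 1), Polynomial.C (c i) * Polynomial.X ^ (r - i))
    (s : Polynomial R)
    (hs : s = ∑ i ∈ Finset.range r, Polynomial.C (c i) * Polynomial.X ^ (r - 1 - i)) :
    (Ideal.Quotient.mk (Ideal.span {p}) (Polynomial.X * s) =
        Ideal.Quotient.mk (Ideal.span {p}) (Polynomial.C (-(c r)))) ∧
    (∀ β : Polynomial R ⧸ Ideal.span {p},
        Ideal.Quotient.mk (Ideal.span {p}) Polynomial.X * β ∈
            Set.range (algebraMap R (Polynomial R ⧸ Ideal.span {p})) →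
          ∃ a : R, β = a • Ideal.Quotient.mk (Ideal.span {p}) s) ∧
    (∀ f : Polynomial R, f.natDegree ≤ r - 1 →
        Ideal.Quotient.mk (Ideal.span {p}) Polynomial.X *
              Ideal.Quotient.mk (Ideal.span {p}) f ∈
            Set.range (algebraMap R (Polynomial R ⧸ Ideal.span {p})) →
          Ideal.Quotient.mk (Ideal.span {p}) f =
            f.coeff (r - 1) • Ideal.Quotient.mk (Ideal.span {p}) s) := by
  -- the key polynomial identity: p = X * s + C (c r)
  have key : p = X * s + C (c r) := by
    rw [hp, hs, Finset.sum_range_succ, Nat.sub_self, pow_zero, mul_one, Finset.mul_sum]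
    congr 1
    refine Finset.sum_congr rfl fun i hi => ?_
    have hi' : i < r := Finset.mem_range.mp hi
    have h1 : r - i = (r - 1 - i) + 1 := by omega
    rw [h1, pow_succ]; ring
  have parta : Ideal.Quotient.mk (Ideal.span {p}) (X * s) =
      Ideal.Quotient.mk (Ideal.span {p}) (C (-(c r))) := by
    rw [Ideal.Quotient.eq, map_neg, sub_neg_eq_add, ← key]
    exact Ideal.mem_span_singleton.mpr dvd_rfl
  rcases subsingleton_or_nontrivial R with hR | hR
  · have : Subsingleton (Polynomial R ⧸ Ideal.span {p}) :=
      Quotient.instSubsingletonQuotient _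
    exact ⟨parta, fun β _ => ⟨0, Subsingleton.elim _ _⟩,
      fun f _ _ => Subsingleton.elim _ _⟩
  -- degree facts
  have hpdeg : p.natDegree ≤ r := by
    rw [hp]
    refine Polynomial.natDegree_sum_le_of_forall_le _ _ fun i hi => ?_
    refine (natDegree_C_mul_le _ _).trans ?_
    simp [Nat.sub_le]
  have hpcoeff : p.coeff r = 1 := by
    rw [hp, finset_sum_coeff]
    rw [Finset.sum_eq_single 0]
    · simp [hc0]
    · intro i hi hi0
      have : r - i ≠ r := by
        have := Finset.mem_range.mp hi; omega
      rw [coeff_C_mul, coeff_X_pow, if_neg (fun h => this h.symm), mul_zero]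
    · simp
  have hm : p.Monic := monic_of_natDegree_le_of_coeff_eq_one r hpdeg hpcoeff
  have hpdeg' : p.natDegree = r := by
    refine le_antisymm hpdeg (le_natDegree_of_ne_zero ?_)
    rw [hpcoeff]; exact one_ne_zero
  -- part (c)
  have partc : ∀ f : Polynomial R, f.natDegree ≤ r - 1 →
      Ideal.Quotient.mk (Ideal.span {p}) X * Ideal.Quotient.mk (Ideal.span {p}) f ∈
          Set.range (algebraMap R (Polynomial R ⧸ Ideal.span {p})) →
        Ideal.Quotient.mk (Ideal.span {p}) f =
          f.coeff (r - 1) • Ideal.Quotient.mk (Ideal.span {p}) s := by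
    intro f hf hmem
    obtain ⟨b, hb⟩ := hmem
    have hb' : Ideal.Quotient.mk (Ideal.span {p}) (X * f - C b) = 0 := by
      rw [map_sub, map_mul, sub_eq_zero]
      exact hb.symm
    have hdvd : p ∣ X * f - C b := by
      rw [← Ideal.mem_span_singleton, ← Ideal.Quotient.eq_zero_iff_mem]
      exact hb'
    set a := f.coeff (r - 1) with ha
    -- g := X*f - C b - C a * p is divisible by p and has degree < r, hence g = 0
    set g := X * f - C b - C a * p with hg
    have hgd : p ∣ g := by
      exact dvd_sub hdvd (Dvd.intro_left _ rfl)
    have hgdeg : g.natDegree ≤ r := by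
      refine (natDegree_sub_le _ _).trans (max_le ((natDegree_sub_le _ _).trans
        (max_le ?_ ?_)) ?_)
      · refine (natDegree_mul_le).trans ?_
        simp only [natDegree_X]
        omega
      · simp
      · refine (natDegree_mul_le).trans ?_
        simp [hpdeg']
    have hgr : g.coeff r = 0 := by
      have h1 : (X * f).coeff r = f.coeff (r - 1) := by
        obtain ⟨k, rfl⟩ : ∃ k, r = k + 1 := ⟨r - 1, by omega⟩
        simp [coeff_X_mul]
      simp only [hg, coeff_sub, h1, coeff_C, coeff_C_mul, hpcoeff]
      have : r ≠ 0 := by omega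
      simp [this, ha]
    have hglt : g.degree < p.degree := by
      have : g.degree < (r : ℕ) := by
        rw [degree_lt_iff_coeff_zero]
        intro m hm'
        rcases eq_or_lt_of_le hm' with h | h
        · rw [← h]; exact hgr
        · exact coeff_eq_zero_of_natDegree_lt (lt_of_le_of_lt hgdeg h)
      rwa [degree_eq_natDegree hm.ne_zero, hpdeg']
    have hg0 : g = 0 := by
      have h1 : g %ₘ p = g := (modByMonic_eq_self_iff hm).mpr hglt
      have h2 : g %ₘ p = 0 := (modByMonic_eq_zero_iff_dvd hm).mpr hgd
      rw [← h1, h2]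
    -- so X * f = C a * p + C b, hence X * (f - C a * s) = C (b + a * c r)
    have hXf : X * f = C a * p + C b := by
      have h := hg0
      rw [hg] at h
      linear_combination h
    have hconst : X * (f - C a * s) = C (b + a * c r) := by
      rw [map_add, map_mul]
      rw [key] at hXf
      linear_combination hXf
    have hfs : f - C a * s = 0 := by
      ext j
      have := congrArg (fun q => Polynomial.coeff q (j + 1)) hconst
      simp only [coeff_X_mul, coeff_C, Nat.add_eq_zero, Nat.succ_ne_zero,
        and_false, if_false] at this
      simpa using this
    have hfeq : f = C a * s := by linear_combination hfs
    rw [hfeq, map_mul]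
    exact (Algebra.smul_def a (Ideal.Quotient.mk (Ideal.span {p}) s)).symm
  refine ⟨parta, ?_, partc⟩
  -- part (b)
  intro β hmem
  obtain ⟨f, rfl⟩ := Ideal.Quotient.mk_surjective β
  have hp1 : p ≠ 1 := by
    intro h
    rw [h, natDegree_one] at hpdeg'
    omega
  have hmod : Ideal.Quotient.mk (Ideal.span {p}) (f %ₘ p) =
      Ideal.Quotient.mk (Ideal.span {p}) f := by
    rw [Ideal.Quotient.eq, Ideal.mem_span_singleton]
    have := modByMonic_add_div f p
    exact ⟨-(f /ₘ p), by linear_combination this⟩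
  have hdeg : (f %ₘ p).natDegree ≤ r - 1 := by
    have := natDegree_modByMonic_lt f hm hp1
    omega
  refine ⟨(f %ₘ p).coeff (r - 1), ?_⟩
  rw [← hmod]
  exact partc _ hdeg (by rwa [hmod])
end
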